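/- Let N, a, m, k', c be positive integers, ε' ≥ 0 and γ ∈ [0,1]. Let Ext: {0,1}^N → {0,1}^a be a (k',ε') oblivious bit-fixing extractor, let f: ({0,1}^a)^{m+1} → {0,1}, let ρ ∈ {0,1,⋆}^{(m+1)N} be a restriction (on m+1 blocks of N coordinates each) leaving at least k' coordinates free in each of the m+1 blocks, and let g: ({0,1}^N)^{m+1} → {0,1}. Suppose the restricted function g|_ρ is computed with error at most γ by a randomized (m+1)-party number-on-forehead protocol exchanging c bits (with party i's forehead holding the i-th block of N coordinates); that is, there is a probability distribution over deterministic c-bit (m+1)-party NOF protocols P such that for every input X ∈ ({0,1}^N)^{m+1}, Pr_P[P(X) ≠ g|_ρ(X)] ≤ γ. Then corr((f∘Ext^{m+1})|_ρ, g|_ρ) ≤ 2γ + 2^c · (R_{m+1}(f) + 4(m+1)ε')^{1/2^{m+1}}, where (f∘Ext^{m+1})|_ρ(X_1,…,X_{m+1}) = f(Ext(Y_1),…,Ext(Y_{m+1})) with Y_i agreeing with ρ on the fixed coordinates of block i and with X_i on the free coordinates, the correlation is over uniform X ∈ ({0,1}^N)^{m+1}, and the base R_{m+1}(f) + 4(m+1)ε'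 of the (1/2^{m+1})-th power is nonnegative. -/

import Mathlib

/-- `(-1)^v` for a bit `v : ZMod 2`. -/
noncomputable def pm1 (v : ZMod 2) : ℝ := if v = 1 then -1 else 1

/-- Correlation of two Boolean functions over the uniform distribution. -/
noncomputable def corr {α : Type*} [Fintype α] (f g : α → ZMod 2) : ℝ :=
  |(∑ x : α, pm1 (f x + g x)) / (Fintype.card α : ℝ)|

/-- Two distributions are `ε`-close: all events get probabilities within `ε`. -/
def CloseTo {α : Type*} [Fintype α] (p q : α → ℝ) (ε : ℝ) : Prop :=
  ∀ S : Finset α, |∑ x ∈ S, p x - ∑ x ∈ S, q x| ≤ ε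

/-- Pushforward of a distribution along a map. -/
noncomputable def push {α β : Type*} [Fintype α] [DecidableEq β] (h : α → β) (p : α → ℝ) :
    β → ℝ :=
  fun y => ∑ x : α, if h x = y then p x else 0

/-- The uniform distribution on a finite type. -/
noncomputable def unif (α : Type*) [Fintype α] : α → ℝ := fun _ => (Fintype.card α : ℝ)⁻¹

/-- Fill the free (`none`) coordinates of a restriction `σ` using `x`. -/
def fill {N : ℕ} (σ : Fin N → Option (ZMod 2)) (x : Fin N → ZMod 2) : Fin N → ZMod 2 :=
  fun j => (σ j).getD (x j)

/-- `Ext` is a `(k', ε')` oblivious bit-fixing source extractor. -/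
def OBFExtractor {N a : ℕ} (Ext : (Fin N → ZMod 2) → (Fin a → ZMod 2))
    (k' : ℕ) (ε' : ℝ) : Prop :=
  ∀ σ : Fin N → Option (ZMod 2),
    k' ≤ (Finset.univ.filter (fun j => σ j = none)).card →
    CloseTo (push (fun x => Ext (fill σ x)) (unif (Fin N → ZMod 2)))
      (unif (Fin a → ZMod 2)) ε'

/-- The `m`-party norm of `g : ({0,1}^b)^m → {0,1}`. -/
noncomputable def partyNorm (m b : ℕ) (g : (Fin m → (Fin b → ZMod 2)) → ZMod 2) : ℝ :=
  (∑ X0 : Fin m → Fin b → ZMod 2, ∑ X1 : Fin m → Fin b → ZMod 2,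
      pm1 (∑ δ : Fin m → Bool, g (fun i => if δ i then X1 i else X0 i))) /
    ((Fintype.card (Fin m → Fin b → ZMod 2) : ℝ)) ^ 2

/-- A deterministic `c`-bit `k`-party number-on-forehead protocol on inputs in
`({0,1}^N)^k`: for each transcript of previously sent bits there is a speaker and a
message that does not depend on the speaker's own block. -/
structure NOF (k N c : ℕ) where
  speaker : List (ZMod 2) → Fin k
  msg : List (ZMod 2) → (Fin k → (Fin N → ZMod 2)) → ZMod 2
  oblivious : ∀ τ X Y, (∀ j, j ≠ speaker τ → X j = Y j) → msg τ X = msg τ Y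

/-- The transcript of the first `t` transmitted bits. -/
def NOF.transcript {k N c : ℕ} (P : NOF k N c) (X : Fin k → (Fin N → ZMod 2)) :
    ℕ → List (ZMod 2)
  | 0 => []
  | t + 1 => P.transcript X t ++ [P.msg (P.transcript X t) X]

/-- The output of the protocol: the `c`-th transmitted bit. -/
def NOF.out {k N c : ℕ} (P : NOF k N c) (X : Fin k → (Fin N → ZMod 2)) : ZMod 2 :=
  (P.transcript X c).getLastD 0


lemma zmod2_cases (u : ZMod 2) : u = 0 ∨ u = 1 := by revert u; decide

lemma pm1_add (u v : ZMod 2) : pm1 (u + v) = pm1 u * pm1 v := by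
  rcases zmod2_cases u with h | h <;> rcases zmod2_cases v with h' | h' <;>
    subst h <;> subst h' <;> simp [pm1]

lemma pm1_abs (v : ZMod 2) : |pm1 v| = 1 := by
  rcases zmod2_cases v with h | h <;> subst h <;> norm_num [pm1]

lemma pm1_sum {ι : Type*} (s : Finset ι) (v : ι → ZMod 2) :
    pm1 (∑ i ∈ s, v i) = ∏ i ∈ s, pm1 (v i) := by
  classical
  induction s using Finset.induction with
  | empty => simp [pm1]
  | @insert _ _ h ih => rw [Finset.sum_insert h, Finset.prod_insert h, pm1_add, ih]

section PiSplit

variable {β M : Type*} [Fintype β]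

lemma sum_pi_cons {k : ℕ} [AddCommMonoid M] (F : (Fin (k+1) → β) → M) :
    ∑ X : Fin (k+1) → β, F X = ∑ x : β, ∑ X : Fin k → β, F (Fin.cons x X) := by
  rw [← (Fintype.sum_equiv (Fin.consEquiv fun _ => β) _ _ (fun p => rfl) :
    ∑ p : β × (Fin k → β), F (Fin.cons p.1 p.2) = _), Fintype.sum_prod_type]

lemma prod_pi_cons {k : ℕ} [CommMonoid M] (F : (Fin (k+1) → β) → M) :
    ∏ X : Fin (k+1) → β, F X = ∏ x : β, ∏ X : Fin k → β, F (Fin.cons x X) := by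
  rw [← (Fintype.prod_equiv (Fin.consEquiv fun _ => β) _ _ (fun p => rfl) :
    ∏ p : β × (Fin k → β), F (Fin.cons p.1 p.2) = _), Fintype.prod_prod_type]

end PiSplit
section Cube

variable {α : Type*} [Fintype α]

/-- select coordinates: `δ i = true` takes `X1 i`. -/
def sel {k : ℕ} {α : Type*} (δ : Fin k → Bool) (X0 X1 : Fin k → α) : Fin k → α :=
  fun i => if δ i then X1 i else X0 i

/-- The cube (BNS) norm of a real function of `k` blocks. -/
noncomputable def cube (k : ℕ) {α : Type*} [Fintype α] (h : (Fin k → α) → ℝ) : ℝ :=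
  (∑ X0 : Fin k → α, ∑ X1 : Fin k → α, ∏ δ : Fin k → Bool, h (sel δ X0 X1)) /
    (Fintype.card (Fin k → α) : ℝ) ^ 2

omit [Fintype α] in
lemma sel_cons {k : ℕ} (b : Bool) (δ : Fin k → Bool) (x0 x1 : α) (X0 X1 : Fin k → α) :
    sel (Fin.cons b δ) (Fin.cons x0 X0) (Fin.cons x1 X1) =
      Fin.cons (if b then x1 else x0) (sel δ X0 X1) := by
  funext i
  refine Fin.cases ?_ (fun j => ?_) i <;> simp [sel]

lemma cube_zero (h : (Fin 0 → α) → ℝ) : cube 0 h = h (fun i => i.elim0) := by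
  have hcard : Fintype.card (Fin 0 → α) = 1 := by simp
  rw [cube, hcard]
  rw [Fintype.sum_unique, Fintype.sum_unique, Fintype.prod_unique]
  norm_num
  congr 1
  exact Subsingleton.elim _ _

lemma cube_succ {k : ℕ} (h : (Fin (k+1) → α) → ℝ) :
    cube (k+1) h = (∑ x0 : α, ∑ x1 : α,
      cube k (fun X => h (Fin.cons x0 X) * h (Fin.cons x1 X))) / (Fintype.card α : ℝ) ^ 2 := by
  have key : ∀ (x0 x1 : α) (X0 X1 : Fin k → α),
      ∏ δ : Fin (k+1) → Bool, h (sel δ (Fin.cons x0 X0) (Fin.cons x1 X1)) =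
      ∏ δ : Fin k → Bool,
        (h (Fin.cons x0 (sel δ X0 X1)) * h (Fin.cons x1 (sel δ X0 X1))) := by
    intro x0 x1 X0 X1
    rw [prod_pi_cons (fun δ => h (sel δ (Fin.cons x0 X0) (Fin.cons x1 X1)))]
    rw [Fintype.prod_bool]
    rw [← Finset.prod_mul_distrib]
    congr 1; funext δ
    rw [sel_cons, sel_cons]
    simp [mul_comm]
  rw [cube]
  rw [sum_pi_cons (fun X0 => ∑ X1 : Fin (k+1) → α,
        ∏ δ : Fin (k+1) → Bool, h (sel δ X0 X1))]
  have step1 : ∀ x0 : α, ∀ X0 : Fin k → α,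
      (∑ X1 : Fin (k+1) → α, ∏ δ : Fin (k+1) → Bool, h (sel δ (Fin.cons x0 X0) X1)) =
      ∑ x1 : α, ∑ X1 : Fin k → α, ∏ δ : Fin k → Bool,
        (h (Fin.cons x0 (sel δ X0 X1)) * h (Fin.cons x1 (sel δ X0 X1))) := by
    intro x0 X0
    rw [sum_pi_cons (fun X1 => ∏ δ : Fin (k+1) → Bool, h (sel δ (Fin.cons x0 X0) X1))]
    exact Finset.sum_congr rfl fun x1 _ => Finset.sum_congr rfl fun X1 _ => key x0 x1 X0 X1
  simp only [step1]
  have swap : ∀ x0 : α,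
      (∑ X0 : Fin k → α, ∑ x1 : α, ∑ X1 : Fin k → α, ∏ δ : Fin k → Bool,
        (h (Fin.cons x0 (sel δ X0 X1)) * h (Fin.cons x1 (sel δ X0 X1)))) =
      ∑ x1 : α, ∑ X0 : Fin k → α, ∑ X1 : Fin k → α, ∏ δ : Fin k → Bool,
        (h (Fin.cons x0 (sel δ X0 X1)) * h (Fin.cons x1 (sel δ X0 X1))) := by
    intro x0; exact Finset.sum_comm
  simp only [swap]
  simp only [cube, Finset.sum_div, div_div]
  refine Finset.sum_congr rfl fun x0 _ => Finset.sum_congr rfl fun x1 _ =>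
    Finset.sum_congr rfl fun X0 _ => Finset.sum_congr rfl fun X1 _ => ?_
  congr 1
  rw [Fintype.card_fun, Fintype.card_fun, Fintype.card_fin, Fintype.card_fin]
  push_cast
  rw [← pow_mul, ← pow_mul, ← pow_add]
  ring_nf

end Cube
lemma avg_pow_le {ι : Type*} [Fintype ι] [Nonempty ι] (Z : ι → ℝ) (n : ℕ)
    (hn : Even n ∨ n = 1) :
    ((∑ i, Z i) / (Fintype.card ι : ℝ)) ^ n ≤ (∑ i, Z i ^ n) / (Fintype.card ι : ℝ) := by
  have hcpos : (0:ℝ) < (Fintype.card ι : ℝ) := by exact_mod_cast Fintype.card_pos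
  rcases hn with hn | rfl
  · rcases n with _ | m
    · simp [hcpos.ne']
    · have h1 : ((∑ i, Z i) / (Fintype.card ι : ℝ)) ^ (m+1)
          ≤ ((∑ i, |Z i|) / (Fintype.card ι : ℝ)) ^ (m+1) := by
        rw [← Even.pow_abs hn]
        refine pow_le_pow_left₀ (abs_nonneg _) ?_ _
        rw [abs_div, abs_of_pos hcpos]
        gcongr
        exact Finset.abs_sum_le_sum_abs _ _
      have hple := pow_sum_div_card_le_sum_pow (s := Finset.univ)
          (f := fun i => |Z i|) (fun i _ => abs_nonneg _) m
      rw [Finset.card_univ] at hple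
      have h2 : ((∑ i, |Z i|) / (Fintype.card ι : ℝ)) ^ (m+1)
          ≤ (∑ i, |Z i| ^ (m+1)) / (Fintype.card ι : ℝ) := by
        rw [div_pow]
        calc (∑ i, |Z i|)^(m+1) / ((Fintype.card ι : ℝ))^(m+1)
            = ((∑ i, |Z i|)^(m+1) / (Fintype.card ι : ℝ)^m) / (Fintype.card ι : ℝ) := by
              rw [div_div, ← pow_succ]
          _ ≤ (∑ i, |Z i|^(m+1)) / (Fintype.card ι : ℝ) := by gcongr
      have h3 : (∑ i, |Z i| ^ (m+1)) = ∑ i, Z i ^ (m+1) :=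
        Finset.sum_congr rfl fun i _ => Even.pow_abs hn _
      calc ((∑ i, Z i) / (Fintype.card ι : ℝ)) ^ (m+1)
          ≤ ((∑ i, |Z i|) / (Fintype.card ι : ℝ)) ^ (m+1) := h1
        _ ≤ (∑ i, |Z i| ^ (m+1)) / (Fintype.card ι : ℝ) := h2
        _ = (∑ i, Z i ^ (m+1)) / (Fintype.card ι : ℝ) := by rw [h3]
  · simp

lemma bns {α : Type*} [Fintype α] [Nonempty α] :
    ∀ (k : ℕ) (h : (Fin k → α) → ℝ) (φ : Fin k → (Fin k → α) → ℝ),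
    (∀ j X, |φ j X| ≤ 1) →
    (∀ j X Y, (∀ i, i ≠ j → X i = Y i) → φ j X = φ j Y) →
    ((∑ X, h X * ∏ j, φ j X) / (Fintype.card (Fin k → α) : ℝ)) ^ (2^k) ≤ cube k h := by
  intro k
  induction k with
  | zero =>
    intro h φ _ _
    rw [cube_zero]
    have hcard : (Fintype.card (Fin 0 → α) : ℝ) = 1 := by simp
    rw [hcard, pow_zero, pow_one, div_one]
    rw [Fintype.sum_unique]
    simp only [Finset.univ_eq_empty, Finset.prod_empty, mul_one]
    exact le_of_eq (congrArg h (Subsingleton.elim _ _))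
  | succ k ih =>
    intro h φ hbd hobl
    classical
    obtain ⟨xs⟩ := ‹Nonempty α›
    set A : ℝ := (Fintype.card α : ℝ) with hA
    set D : ℝ := (Fintype.card (Fin k → α) : ℝ) with hDdef
    have hApos : (0:ℝ) < A := by rw [hA]; exact_mod_cast Fintype.card_pos
    have hDpos : (0:ℝ) < D := by rw [hDdef]; exact_mod_cast Fintype.card_pos
    set S := ∑ X : Fin (k+1) → α, h X * ∏ j, φ j X with hSdef
    set ψ : (Fin k → α) → ℝ := fun X' => φ 0 (Fin.cons xs X') with hψ
    set T : (Fin k → α) → ℝ :=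
      fun X' => ∑ x : α, h (Fin.cons x X') * ∏ j : Fin k, φ j.succ (Fin.cons x X') with hT
    have hcons_ne : ∀ (x y : α) (X' : Fin k → α) (i : Fin (k+1)), i ≠ 0 →
        (Fin.cons x X' : Fin (k+1) → α) i = (Fin.cons y X' : Fin (k+1) → α) i := by
      intro x y X' i hi
      obtain ⟨j, rfl⟩ := Fin.eq_succ_of_ne_zero hi
      simp
    have hS : S = ∑ X', ψ X' * T X' := by
      rw [hSdef, sum_pi_cons (fun X => h X * ∏ j, φ j X)]
      rw [Finset.sum_comm]
      refine Finset.sum_congr rfl fun X' _ => ?_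
      rw [hT]
      simp only []
      rw [Finset.mul_sum]
      refine Finset.sum_congr rfl fun x _ => ?_
      rw [Fin.prod_univ_succ]
      have : φ 0 (Fin.cons x X') = ψ X' := hobl 0 _ _ (hcons_ne x xs X')
      rw [this]; ring
    have hCS : S ^ 2 ≤ D * ∑ X', T X' ^ 2 := by
      rw [hS]
      have h1 := Finset.sum_mul_sq_le_sq_mul_sq Finset.univ ψ T
      have h2 : (∑ X', ψ X' ^ 2) ≤ D := by
        have : (∑ X' : Fin k → α, ψ X' ^ 2) ≤ ∑ X' : Fin k → α, 1 := by
          refine Finset.sum_le_sum fun X' _ => ?_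
          have hb := hbd 0 (Fin.cons xs X')
          calc ψ X' ^ 2 = |ψ X'| ^ 2 := (sq_abs _).symm
            _ ≤ 1 ^ 2 := pow_le_pow_left₀ (abs_nonneg _) hb 2
            _ = 1 := one_pow 2
        simpa [hDdef, Finset.card_univ] using this
      calc (∑ X', ψ X' * T X') ^ 2 ≤ (∑ X', ψ X' ^ 2) * ∑ X', T X' ^ 2 := h1
        _ ≤ D * ∑ X', T X' ^ 2 :=
            mul_le_mul_of_nonneg_right h2 (Finset.sum_nonneg fun _ _ => sq_nonneg _)
    set h' : α → α → (Fin k → α) → ℝ :=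
      fun x0 x1 X' => h (Fin.cons x0 X') * h (Fin.cons x1 X') with hh'
    set φ' : α → α → Fin k → (Fin k → α) → ℝ :=
      fun x0 x1 j X' => φ j.succ (Fin.cons x0 X') * φ j.succ (Fin.cons x1 X') with hφ'
    have hTsq : ∀ X', T X' ^ 2 =
        ∑ x0 : α, ∑ x1 : α, h' x0 x1 X' * ∏ j : Fin k, φ' x0 x1 j X' := by
      intro X'
      rw [sq, hT]
      simp only []
      rw [Finset.sum_mul_sum]
      refine Finset.sum_congr rfl fun x0 _ => Finset.sum_congr rfl fun x1 _ => ?_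
      rw [hh', hφ']
      simp only []
      rw [Finset.prod_mul_distrib]
      ring
    have hswap : (∑ X', T X' ^ 2) =
        ∑ x0 : α, ∑ x1 : α, ∑ X', h' x0 x1 X' * ∏ j, φ' x0 x1 j X' := by
      simp only [hTsq]
      rw [Finset.sum_comm]
      exact Finset.sum_congr rfl fun x0 _ => Finset.sum_comm
    have hIH : ∀ x0 x1 : α,
        ((∑ X', h' x0 x1 X' * ∏ j, φ' x0 x1 j X') / D) ^ (2^k) ≤ cube k (h' x0 x1) := by
      intro x0 x1
      refine ih (h' x0 x1) (φ' x0 x1) (fun j X => ?_) (fun j X Y hXY => ?_)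
      · rw [hφ']; simp only []
        rw [abs_mul]
        exact mul_le_one₀ (hbd _ _) (abs_nonneg _) (hbd _ _)
      · have key : ∀ (x : α) (i : Fin (k+1)), i ≠ j.succ →
            (Fin.cons x X : Fin (k+1) → α) i = (Fin.cons x Y : Fin (k+1) → α) i := by
          intro x i hi
          rcases Fin.eq_zero_or_eq_succ i with rfl | ⟨i', rfl⟩
          · simp
          · simp only [Fin.cons_succ]
            exact hXY i' (fun hc => hi (by rw [hc]))
        rw [hφ']; simp only []
        rw [hobl j.succ _ _ (key x0), hobl j.succ _ _ (key x1)]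
    set Z : α × α → ℝ :=
      fun p => (∑ X', h' p.1 p.2 X' * ∏ j, φ' p.1 p.2 j X') / D with hZ
    have hZT : (∑ X', T X' ^ 2) = (∑ p : α × α, Z p) * D := by
      rw [hswap, Fintype.sum_prod_type, Finset.sum_mul]
      refine Finset.sum_congr rfl fun x0 _ => ?_
      rw [Finset.sum_mul]
      refine Finset.sum_congr rfl fun x1 _ => ?_
      rw [hZ]
      exact (div_mul_cancel₀ _ hDpos.ne').symm
    have hu2 : (S / (A * D)) ^ 2 ≤ (∑ p : α × α, Z p) / A ^ 2 := by
      have h2 : S ^ 2 ≤ ((∑ p : α × α, Z p) * D) * D := by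
        calc S ^ 2 ≤ D * ∑ X', T X' ^ 2 := hCS
          _ = ((∑ p : α × α, Z p) * D) * D := by rw [hZT]; ring
      calc (S / (A * D)) ^ 2 = S ^ 2 / (A^2 * (D * D)) := by
            rw [div_pow, mul_pow]; ring_nf
        _ ≤ (((∑ p : α × α, Z p) * D) * D) / (A^2 * (D * D)) := by gcongr
        _ = (∑ p : α × α, Z p) / A ^ 2 := by
            field_simp
    have hcard : (Fintype.card (Fin (k+1) → α) : ℝ) = A * D := by
      rw [hA, hDdef, Fintype.card_fun, Fintype.card_fun, Fintype.card_fin, Fintype.card_fin]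
      push_cast
      rw [pow_succ]; ring
    have hcard2 : (Fintype.card (α × α) : ℝ) = A ^ 2 := by
      rw [Fintype.card_prod, hA]; push_cast; ring
    have heven : Even (2^k) ∨ 2^k = 1 := by
      rcases k with _ | k'
      · right; rfl
      · exact Or.inl ⟨2^k', by rw [pow_succ, mul_two]⟩
    have havg := avg_pow_le Z (2^k) heven
    rw [hcard2] at havg
    have hpow : (S / (A * D)) ^ (2 ^ (k + 1)) = ((S / (A*D))^2) ^ (2^k) := by
      rw [← pow_mul]
      congr 1
      rw [pow_succ]; ring
    rw [hcard, hpow]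
    calc ((S / (A*D))^2)^(2^k) ≤ ((∑ p : α × α, Z p) / A^2)^(2^k) :=
          pow_le_pow_left₀ (sq_nonneg _) hu2 _
      _ ≤ (∑ p : α × α, Z p ^ (2^k)) / A^2 := havg
      _ ≤ (∑ p : α × α, cube k (h' p.1 p.2)) / A^2 := by
          gcongr with p hp
          exact hIH p.1 p.2
      _ = cube (k+1) h := by
          rw [cube_succ, Fintype.sum_prod_type]

lemma cube_nonneg {α : Type*} [Fintype α] [Nonempty α] (k : ℕ) (hk : 0 < k)
    (h : (Fin k → α) → ℝ) : 0 ≤ cube k h := by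
  rcases k with _ | k'
  · exact absurd hk (lt_irrefl 0)
  · have hb := bns (k'+1) h (fun _ _ => 1) (fun _ _ => by norm_num) (fun _ _ _ _ => rfl)
    exact le_trans (Even.pow_nonneg ⟨2^k', by rw [pow_succ, mul_two]⟩ _) hb
lemma abs_le_rpow_of_pow_le {u B : ℝ} {k : ℕ} (hk : 0 < k) (h : u ^ (2^k) ≤ B) :
    |u| ≤ B ^ ((1:ℝ) / 2^k) := by
  have hev : Even (2^k) := by
    rcases k with _ | k'
    · exact absurd hk (lt_irrefl 0)
    · exact ⟨2^k', by rw [pow_succ, mul_two]⟩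
  have h2 : |u| ^ (2^k) ≤ B := by rw [Even.pow_abs hev]; exact h
  have h3 := Real.rpow_le_rpow (pow_nonneg (abs_nonneg u) _) h2
    (by positivity : (0:ℝ) ≤ 1 / 2^k)
  have hexp : (((2:ℕ)^k : ℕ) : ℝ) * ((1:ℝ) / 2^k) = 1 := by
    push_cast
    rw [mul_one_div, div_self (pow_ne_zero _ (two_ne_zero))]
  rwa [← Real.rpow_natCast |u| (2^k), ← Real.rpow_mul (abs_nonneg u), hexp,
    Real.rpow_one] at h3

lemma sum_pi_snoc {n : ℕ} {β M : Type*} [Fintype β] [AddCommMonoid M]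
    (F : (Fin (n+1) → β) → M) :
    ∑ τ : Fin (n+1) → β, F τ = ∑ τ : Fin n → β, ∑ b : β, F (Fin.snoc τ b) := by
  rw [← (Fintype.sum_equiv (Fin.snocEquiv fun _ => β) _ _ (fun p => rfl) :
    ∑ p : β × (Fin n → β), F (Fin.snoc p.2 p.1) = _), Fintype.sum_prod_type]
  exact Finset.sum_comm

lemma NOF.decomp {k N c : ℕ} (P : NOF k N c) (X : Fin k → (Fin N → ZMod 2)) :
    ∀ (n : ℕ) (G : List (ZMod 2) → ℝ),
    G (P.transcript X n) = ∑ τ : Fin n → ZMod 2, G (List.ofFn τ) *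
      ∏ t : Fin n, (if P.msg ((List.ofFn τ).take t.val) X = τ t then (1:ℝ) else 0) := by
  intro n
  induction n with
  | zero =>
    intro G
    rw [Fintype.sum_unique]
    simp [NOF.transcript]
  | succ n ih =>
    intro G
    show G (P.transcript X n ++ [P.msg (P.transcript X n) X]) = _
    rw [ih (fun L => G (L ++ [P.msg L X]))]
    rw [sum_pi_snoc (fun τ : Fin (n+1) → ZMod 2 => G (List.ofFn τ) *
      ∏ t : Fin (n+1), (if P.msg ((List.ofFn τ).take t.val) X = τ t then (1:ℝ) else 0))]
    refine Finset.sum_congr rfl fun τ _ => ?_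
    have hofn : ∀ b : ZMod 2,
        List.ofFn (Fin.snoc τ b : Fin (n+1) → ZMod 2) = List.ofFn τ ++ [b] := by
      intro b
      rw [List.ofFn_succ', List.concat_eq_append]
      simp
    have hfactor : ∀ b : ZMod 2,
        (∏ t : Fin (n+1), (if P.msg ((List.ofFn (Fin.snoc τ b : Fin (n+1) → ZMod 2)).take t.val)
            X = (Fin.snoc τ b : Fin (n+1) → ZMod 2) t then (1:ℝ) else 0))
        = (∏ t : Fin n, (if P.msg ((List.ofFn τ).take t.val) X = τ t then (1:ℝ) else 0))
          * (if P.msg (List.ofFn τ) X = b then (1:ℝ) else 0) := by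
      intro b
      rw [Fin.prod_univ_castSucc]
      congr 1
      · refine Finset.prod_congr rfl fun t _ => ?_
        rw [hofn b, Fin.snoc_castSucc]
        have htake : (List.ofFn τ ++ [b]).take (t.castSucc).val = (List.ofFn τ).take t.val := by
          rw [Fin.coe_castSucc]
          exact List.take_append_of_le_length (by simp [t.isLt.le])
        rw [htake]
      · rw [hofn b, Fin.snoc_last]
        have htake : (List.ofFn τ ++ [b]).take (Fin.last n).val = List.ofFn τ := by
          rw [Fin.val_last, List.take_append_of_le_length (by simp)]
          exact List.take_of_length_le (by simp)
        rw [htake]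
    have hterm : ∀ b : ZMod 2,
        G (List.ofFn (Fin.snoc τ b : Fin (n+1) → ZMod 2)) *
          (∏ t : Fin (n+1), (if P.msg ((List.ofFn (Fin.snoc τ b : Fin (n+1) → ZMod 2)).take t.val)
            X = (Fin.snoc τ b : Fin (n+1) → ZMod 2) t then (1:ℝ) else 0))
        = (if P.msg (List.ofFn τ) X = b then G (List.ofFn τ ++ [b]) else 0) *
          ∏ t : Fin n, (if P.msg ((List.ofFn τ).take t.val) X = τ t then (1:ℝ) else 0) := by
      intro b
      rw [hfactor b, hofn b]
      by_cases hb : P.msg (List.ofFn τ) X = b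
      · simp [hb]
      · simp [hb]
    rw [Finset.sum_congr rfl fun b _ => hterm b, ← Finset.sum_mul, Finset.sum_ite_eq]
    simp
lemma nof_bound {k N c : ℕ} (hk : 0 < k) (P : NOF k N c)
    (h : (Fin k → (Fin N → ZMod 2)) → ℝ) (B : ℝ) (hB : cube k h ≤ B) :
    |(∑ X : Fin k → (Fin N → ZMod 2), h X * pm1 (P.out X)) /
        (Fintype.card (Fin k → (Fin N → ZMod 2)) : ℝ)|
      ≤ 2^c * B ^ ((1:ℝ) / 2^k) := by
  classical
  set DC := (Fintype.card (Fin k → (Fin N → ZMod 2)) : ℝ) with hDC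
  set ind : (Fin c → ZMod 2) → Fin c → (Fin k → (Fin N → ZMod 2)) → ℝ :=
    fun τ t X => if P.msg ((List.ofFn τ).take t.val) X = τ t then (1:ℝ) else 0 with hind
  set φ : (Fin c → ZMod 2) → Fin k → (Fin k → (Fin N → ZMod 2)) → ℝ :=
    fun τ j X => ∏ t ∈ Finset.univ.filter
      (fun t : Fin c => P.speaker ((List.ofFn τ).take t.val) = j), ind τ t X with hφ
  have hprod : ∀ τ X, (∏ j : Fin k, φ τ j X) = ∏ t : Fin c, ind τ t X := by
    intro τ X
    exact Finset.prod_fiberwise Finset.univ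
      (fun t : Fin c => P.speaker ((List.ofFn τ).take t.val)) (fun t => ind τ t X)
  have hsum : (∑ X, h X * pm1 (P.out X)) = ∑ τ : Fin c → ZMod 2,
      pm1 ((List.ofFn τ).getLastD 0) * ∑ X, h X * ∏ j : Fin k, φ τ j X := by
    calc (∑ X, h X * pm1 (P.out X))
        = ∑ X, ∑ τ : Fin c → ZMod 2, h X *
            (pm1 ((List.ofFn τ).getLastD 0) * ∏ t : Fin c, ind τ t X) := by
          refine Finset.sum_congr rfl fun X _ => ?_
          rw [show pm1 (P.out X) = ∑ τ : Fin c → ZMod 2,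
              pm1 ((List.ofFn τ).getLastD 0) * ∏ t : Fin c, ind τ t X from
            P.decomp X c (fun L => pm1 (L.getLastD 0)), Finset.mul_sum]
      _ = ∑ τ : Fin c → ZMod 2, ∑ X, h X *
            (pm1 ((List.ofFn τ).getLastD 0) * ∏ t : Fin c, ind τ t X) := Finset.sum_comm
      _ = _ := by
          refine Finset.sum_congr rfl fun τ _ => ?_
          rw [Finset.mul_sum]
          refine Finset.sum_congr rfl fun X _ => ?_
          rw [hprod τ X]; ring
  have hφbd : ∀ τ j X, |φ τ j X| ≤ 1 := by
    intro τ j X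
    rw [hφ]
    simp only []
    rw [Finset.abs_prod]
    refine Finset.prod_le_one (fun t _ => abs_nonneg _) (fun t _ => ?_)
    rw [hind]
    simp only []
    split <;> simp
  have hφobl : ∀ τ j X Y, (∀ i, i ≠ j → X i = Y i) → φ τ j X = φ τ j Y := by
    intro τ j X Y hXY
    refine Finset.prod_congr rfl fun t ht => ?_
    rw [Finset.mem_filter] at ht
    have hmsg : P.msg ((List.ofFn τ).take t.val) X = P.msg ((List.ofFn τ).take t.val) Y :=
      P.oblivious _ X Y (fun i hi => hXY i (by rw [ht.2] at hi; exact hi))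
    rw [hind]
    simp only [hmsg]
  have hbound : ∀ τ : Fin c → ZMod 2,
      |(∑ X, h X * ∏ j : Fin k, φ τ j X) / DC| ≤ B ^ ((1:ℝ) / 2^k) := by
    intro τ
    refine abs_le_rpow_of_pow_le hk ?_
    exact le_trans (bns k h (φ τ) (hφbd τ) (hφobl τ)) hB
  calc |(∑ X, h X * pm1 (P.out X)) / DC|
      = |∑ τ : Fin c → ZMod 2,
          pm1 ((List.ofFn τ).getLastD 0) * ((∑ X, h X * ∏ j : Fin k, φ τ j X) / DC)| := by
        rw [hsum, Finset.sum_div]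
        congr 1
        exact Finset.sum_congr rfl fun τ _ => (mul_div_assoc _ _ _)
    _ ≤ ∑ τ : Fin c → ZMod 2,
          |pm1 ((List.ofFn τ).getLastD 0) * ((∑ X, h X * ∏ j : Fin k, φ τ j X) / DC)| :=
        Finset.abs_sum_le_sum_abs _ _
    _ ≤ ∑ _τ : Fin c → ZMod 2, B ^ ((1:ℝ) / 2^k) := by
        refine Finset.sum_le_sum fun τ _ => ?_
        rw [abs_mul, pm1_abs, one_mul]
        exact hbound τ
    _ = 2^c * B ^ ((1:ℝ) / 2^k) := by
        rw [Finset.sum_const, Finset.card_univ, nsmul_eq_mul]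
        congr 1
        rw [Fintype.card_fun, Fintype.card_fin]
        push_cast [ZMod.card 2]
        norm_num
lemma close_exp {β : Type*} [Fintype β] {p q : β → ℝ} {ε : ℝ}
    (hpq : CloseTo p q ε) (h : β → ℝ) (hh : ∀ x, |h x| ≤ 1) :
    |∑ x, p x * h x - ∑ x, q x * h x| ≤ 2 * ε := by
  classical
  have habs : |∑ x, (p x - q x) * h x| ≤ ∑ x, |p x - q x| := by
    refine le_trans (Finset.abs_sum_le_sum_abs _ _) (Finset.sum_le_sum fun x _ => ?_)
    rw [abs_mul]
    calc |p x - q x| * |h x| ≤ |p x - q x| * 1 :=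
          mul_le_mul_of_nonneg_left (hh x) (abs_nonneg _)
      _ = _ := mul_one _
  have key : (∑ x, |p x - q x|) ≤ 2 * ε := by
    set S := Finset.univ.filter (fun x => q x ≤ p x) with hS
    have h1 : (∑ x ∈ S, (p x - q x)) ≤ ε := by
      have h0 := hpq S
      rw [← Finset.sum_sub_distrib] at h0
      exact le_trans (le_abs_self _) h0
    have h2 : (∑ x ∈ Sᶜ, (q x - p x)) ≤ ε := by
      have h0 := hpq Sᶜ
      rw [abs_sub_comm, ← Finset.sum_sub_distrib] at h0
      exact le_trans (le_abs_self _) h0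
    have hsplit : (∑ x, |p x - q x|) = (∑ x ∈ S, (p x - q x)) + ∑ x ∈ Sᶜ, (q x - p x) := by
      rw [← Finset.sum_add_sum_compl S (fun x => |p x - q x|)]
      congr 1
      · refine Finset.sum_congr rfl fun x hx => ?_
        rw [hS, Finset.mem_filter] at hx
        exact abs_of_nonneg (by linarith [hx.2])
      · refine Finset.sum_congr rfl fun x hx => ?_
        rw [Finset.mem_compl, hS, Finset.mem_filter] at hx
        have hlt : ¬ q x ≤ p x := fun hc => hx ⟨Finset.mem_univ _, hc⟩
        rw [abs_sub_comm]
        exact abs_of_nonneg (by linarith)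
    linarith
  have heq : (∑ x, p x * h x - ∑ x, q x * h x) = ∑ x, (p x - q x) * h x := by
    rw [← Finset.sum_sub_distrib]
    exact Finset.sum_congr rfl fun x _ => by ring
  rw [heq]
  exact le_trans habs key

lemma sum_prod_coord {ι β : Type*} [Fintype ι] [DecidableEq ι] [Fintype β] (r : ι → β → ℝ) :
    ∑ W : ι → β, ∏ i, r i (W i) = ∏ i, ∑ x, r i x := by
  rw [Finset.prod_univ_sum, Fintype.piFinset_univ]

lemma hybrid {ι β : Type*} [Fintype ι] [DecidableEq ι] [Fintype β]
    (p q : ι → β → ℝ) (hp0 : ∀ i x, 0 ≤ p i x) (hp1 : ∀ i, ∑ x, p i x = 1)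
    (hq0 : ∀ i x, 0 ≤ q i x) (hq1 : ∀ i, ∑ x, q i x = 1)
    (ε : ℝ)
    (hcl : ∀ (i : ι) (h : β → ℝ), (∀ x, |h x| ≤ 1) →
      |∑ x, p i x * h x - ∑ x, q i x * h x| ≤ 2*ε)
    (H : (ι → β) → ℝ) (hH : ∀ W, |H W| ≤ 1) :
    |∑ W : ι → β, (∏ i, p i (W i)) * H W - ∑ W : ι → β, (∏ i, q i (W i)) * H W|
      ≤ (Fintype.card ι) * (2*ε) := by
  classical
  suffices hs : ∀ s : Finset ι,
      |∑ W : ι → β, ((∏ i ∈ s, p i (W i)) * ∏ i ∈ sᶜ, q i (W i)) * H W -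
       ∑ W : ι → β, (∏ i, q i (W i)) * H W| ≤ s.card * (2*ε) by
    have h0 := hs Finset.univ
    rw [Finset.card_univ] at h0
    simpa [Finset.compl_univ] using h0
  intro s
  induction s using Finset.induction with
  | empty => simp
  | @insert j s hj ih =>
    have hjc : j ∈ sᶜ := Finset.mem_compl.2 hj
    set C : (ι → β) → ℝ :=
      fun W => (∏ i ∈ s, p i (W i)) * ∏ i ∈ sᶜ.erase j, q i (W i) with hC
    have hC0 : ∀ W, 0 ≤ C W :=
      fun W => mul_nonneg (Finset.prod_nonneg fun i _ => hp0 i _)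
        (Finset.prod_nonneg fun i _ => hq0 i _)
    have e1 : ∀ W : ι → β, ((∏ i ∈ insert j s, p i (W i)) * ∏ i ∈ (insert j s)ᶜ, q i (W i))
        = p j (W j) * C W := by
      intro W
      rw [Finset.prod_insert hj, Finset.compl_insert, hC]
      ring
    have e2 : ∀ W : ι → β, ((∏ i ∈ s, p i (W i)) * ∏ i ∈ sᶜ, q i (W i))
        = q j (W j) * C W := by
      intro W
      rw [← Finset.mul_prod_erase sᶜ _ hjc, hC]
      ring
    set S : β → ℝ := fun b => ∑ W : ι → β, (if W j = b then C W * H W else 0) with hSdef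
    -- the full-product representation of the fiber mass
    have hfib : ∀ b : β, (∑ W : ι → β, (if W j = b then C W else 0)) = 1 := by
      intro b
      set r : ι → β → ℝ := fun i x =>
        if i = j then (if x = b then 1 else 0) else (if i ∈ s then p i x else q i x) with hr
      have hfull : ∀ W : ι → β, (if W j = b then C W else 0) = ∏ i, r i (W i) := by
        intro W
        rw [← Finset.mul_prod_erase Finset.univ (fun i => r i (W i)) (Finset.mem_univ j)]
        have hrj : r j (W j) = (if W j = b then 1 else 0) := by rw [hr]; simp
        have herase : Finset.univ.erase j = s ∪ sᶜ.erase j := by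
          ext i
          simp only [Finset.mem_erase, Finset.mem_univ, and_true, Finset.mem_union,
            Finset.mem_compl]
          constructor
          · intro hi
            by_cases his : i ∈ s
            · exact Or.inl his
            · exact Or.inr ⟨hi, his⟩
          · rintro (his | ⟨hi, _⟩)
            · exact fun hij => hj (hij ▸ his)
            · exact hi
        have hdisj : Disjoint s (sᶜ.erase j) := by
          refine Finset.disjoint_left.2 fun i his hic => ?_
          exact (Finset.mem_compl.1 (Finset.mem_of_mem_erase hic)) his
        have hprodrest : (∏ i ∈ Finset.univ.erase j, r i (W i)) = C W := by
          rw [herase, Finset.prod_union hdisj, hC]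
          congr 1
          · refine Finset.prod_congr rfl fun i his => ?_
            rw [hr]
            have : i ≠ j := fun hij => hj (hij ▸ his)
            simp [this, his]
          · refine Finset.prod_congr rfl fun i hie => ?_
            rw [hr]
            have h1 : i ≠ j := (Finset.mem_erase.1 hie).1
            have h2 : i ∉ s := Finset.mem_compl.1 (Finset.mem_of_mem_erase hie)
            simp [h1, h2]
        rw [hrj, hprodrest]
        by_cases hw : W j = b <;> simp [hw]
      rw [Finset.sum_congr rfl fun W _ => hfull W, sum_prod_coord]
      refine Finset.prod_eq_one fun i _ => ?_
      rw [hr]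
      by_cases hij : i = j
      · simp only [hij, if_true]
        rw [Finset.sum_ite_eq' Finset.univ b (fun _ => (1:ℝ))]
        simp
      · simp only [hij, if_false]
        by_cases his : i ∈ s <;> simp [his, hp1 i, hq1 i]
    have hSbd : ∀ b, |S b| ≤ 1 := by
      intro b
      rw [hSdef]
      refine le_trans (Finset.abs_sum_le_sum_abs _ _) ?_
      rw [← hfib b]
      refine Finset.sum_le_sum fun W _ => ?_
      by_cases hw : W j = b
      · simp only [hw, if_true]
        rw [abs_mul, abs_of_nonneg (hC0 W)]
        calc C W * |H W| ≤ C W * 1 := mul_le_mul_of_nonneg_left (hH W) (hC0 W)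
          _ = C W := mul_one _
      · simp [hw]
    have hD : (∑ W : ι → β, ((∏ i ∈ insert j s, p i (W i)) * ∏ i ∈ (insert j s)ᶜ, q i (W i)) * H W)
        - (∑ W : ι → β, ((∏ i ∈ s, p i (W i)) * ∏ i ∈ sᶜ, q i (W i)) * H W)
        = (∑ x, p j x * S x) - ∑ x, q j x * S x := by
      rw [← Finset.sum_sub_distrib, ← Finset.sum_sub_distrib]
      calc (∑ W : ι → β, (((∏ i ∈ insert j s, p i (W i)) * ∏ i ∈ (insert j s)ᶜ, q i (W i)) * H W
              - ((∏ i ∈ s, p i (W i)) * ∏ i ∈ sᶜ, q i (W i)) * H W))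
          = ∑ W : ι → β, (p j (W j) - q j (W j)) * (C W * H W) := by
            refine Finset.sum_congr rfl fun W _ => ?_
            rw [e1 W, e2 W]; ring
        _ = ∑ W : ι → β, ∑ x, (if W j = x then (p j x - q j x) * (C W * H W) else 0) := by
            refine Finset.sum_congr rfl fun W _ => ?_
            rw [Finset.sum_ite_eq]
            simp
        _ = ∑ x, ∑ W : ι → β, (if W j = x then (p j x - q j x) * (C W * H W) else 0) :=
            Finset.sum_comm
        _ = ∑ x, (p j x * S x - q j x * S x) := by
            refine Finset.sum_congr rfl fun x _ => ?_
            rw [hSdef]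
            simp only []
            rw [show (p j x * ∑ W : ι → β, (if W j = x then C W * H W else 0))
                - (q j x * ∑ W : ι → β, (if W j = x then C W * H W else 0))
              = (p j x - q j x) * ∑ W : ι → β, (if W j = x then C W * H W else 0) by ring]
            rw [Finset.mul_sum]
            refine Finset.sum_congr rfl fun W _ => ?_
            by_cases hw : W j = x <;> simp [hw]
    have hstep : |(∑ W : ι → β, ((∏ i ∈ insert j s, p i (W i)) * ∏ i ∈ (insert j s)ᶜ, q i (W i)) * H W)
        - (∑ W : ι → β, ((∏ i ∈ s, p i (W i)) * ∏ i ∈ sᶜ, q i (W i)) * H W)| ≤ 2*ε := by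
      rw [hD]
      exact hcl j S hSbd
    calc |(∑ W : ι → β, ((∏ i ∈ insert j s, p i (W i)) * ∏ i ∈ (insert j s)ᶜ, q i (W i)) * H W)
          - ∑ W : ι → β, (∏ i, q i (W i)) * H W|
        ≤ |(∑ W : ι → β, ((∏ i ∈ insert j s, p i (W i)) * ∏ i ∈ (insert j s)ᶜ, q i (W i)) * H W)
            - (∑ W : ι → β, ((∏ i ∈ s, p i (W i)) * ∏ i ∈ sᶜ, q i (W i)) * H W)|
          + |(∑ W : ι → β, ((∏ i ∈ s, p i (W i)) * ∏ i ∈ sᶜ, q i (W i)) * H W)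
            - ∑ W : ι → β, (∏ i, q i (W i)) * H W| := abs_sub_le _ _ _
      _ ≤ 2*ε + s.card * (2*ε) := add_le_add hstep ih
      _ ≤ (insert j s).card * (2*ε) := by
          rw [Finset.card_insert_of_notMem hj]
          push_cast
          have hε : 0 ≤ 2*ε := le_trans (abs_nonneg _) (hcl j (fun _ => 0) (by simp))
          nlinarith [hε]
lemma unif_nonneg (α : Type*) [Fintype α] (x : α) : 0 ≤ unif α x := by
  rw [unif]
  positivity

lemma unif_sum (α : Type*) [Fintype α] [Nonempty α] : (∑ x, unif α x) = 1 := by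
  simp only [unif]
  rw [Finset.sum_const, Finset.card_univ, nsmul_eq_mul]
  rw [mul_inv_cancel₀]
  exact_mod_cast Fintype.card_ne_zero

lemma push_nonneg {α β : Type*} [Fintype α] [DecidableEq β] (e : α → β) (y : β) :
    0 ≤ push e (unif α) y := by
  refine Finset.sum_nonneg fun x _ => ?_
  split
  · exact unif_nonneg α x
  · exact le_refl 0

lemma push_sum {α β : Type*} [Fintype α] [Nonempty α] [Fintype β] [DecidableEq β]
    (e : α → β) : (∑ y, push e (unif α) y) = 1 := by
  rw [show (∑ y, push e (unif α) y) = ∑ y : β, ∑ x : α, (if e x = y then unif α x else 0)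
    from rfl, Finset.sum_comm]
  rw [show (∑ x : α, ∑ y : β, (if e x = y then unif α x else 0)) = ∑ x : α, unif α x by
    refine Finset.sum_congr rfl fun x _ => ?_
    rw [Finset.sum_ite_eq]
    simp]
  exact unif_sum α

lemma sum_pair_to_sum {k : ℕ} {γ M : Type*} [Fintype γ] [AddCommMonoid M]
    (g : (Fin k → γ) → (Fin k → γ) → M) :
    ∑ X0 : Fin k → γ, ∑ X1 : Fin k → γ, g X0 X1
      = ∑ Y : (Fin k ⊕ Fin k) → γ, g (fun i => Y (Sum.inl i)) (fun i => Y (Sum.inr i)) := by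
  rw [show (∑ X0 : Fin k → γ, ∑ X1 : Fin k → γ, g X0 X1)
      = ∑ p : (Fin k → γ) × (Fin k → γ), g p.1 p.2 from (Fintype.sum_prod_type (f := fun p : (Fin k → γ) × (Fin k → γ) => g p.1 p.2)).symm]
  exact (Fintype.sum_equiv (Equiv.sumArrowEquivProdArrow (Fin k) (Fin k) γ)
    (fun Y => g (fun i => Y (Sum.inl i)) (fun i => Y (Sum.inr i)))
    (fun p => g p.1 p.2) (fun Y => rfl)).symm

lemma card_pair_fun {k : ℕ} (γ : Type*) [Fintype γ] :
    (Fintype.card ((Fin k ⊕ Fin k) → γ) : ℝ) = (Fintype.card (Fin k → γ) : ℝ)^2 := by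
  rw [Fintype.card_fun, Fintype.card_fun, Fintype.card_sum, Fintype.card_fin]
  push_cast
  rw [← pow_mul]
  congr 1
  ring

lemma sum_push_prod {ι α β : Type*} [Fintype ι] [DecidableEq ι] [Fintype α] [Nonempty α]
    [Fintype β] [DecidableEq β] (e : ι → α → β) (H : (ι → β) → ℝ) :
    ∑ Y : ι → α, (Fintype.card (ι → α) : ℝ)⁻¹ * H (fun j => e j (Y j))
      = ∑ W : ι → β, (∏ j, push (e j) (unif α) (W j)) * H W := by
  classical
  have hcoef : ∀ W : ι → β, (∏ j, push (e j) (unif α) (W j))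
      = ∑ Y : ι → α, (if (fun j => e j (Y j)) = W then (Fintype.card (ι → α) : ℝ)⁻¹ else 0) := by
    intro W
    have h1 : (∏ j, push (e j) (unif α) (W j))
        = ∏ j, ∑ x : α, (if e j x = W j then (Fintype.card α : ℝ)⁻¹ else 0) := rfl
    rw [h1, Finset.prod_univ_sum, Fintype.piFinset_univ]
    refine Finset.sum_congr rfl fun Y _ => ?_
    have h2 : ∀ j, (if e j (Y j) = W j then (Fintype.card α : ℝ)⁻¹ else 0)
        = (Fintype.card α : ℝ)⁻¹ * (if e j (Y j) = W j then 1 else 0) := by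
      intro j; split <;> simp
    rw [Finset.prod_congr rfl fun j _ => h2 j, Finset.prod_mul_distrib, Finset.prod_const,
      Finset.prod_boole, Finset.card_univ]
    have h3 : (∀ j ∈ Finset.univ, e j (Y j) = W j) ↔ (fun j => e j (Y j)) = W := by
      rw [funext_iff]; simp
    rw [Fintype.card_fun]
    push_cast
    rw [← inv_pow]
    by_cases hYW : (fun j => e j (Y j)) = W
    · rw [if_pos (h3.2 hYW), if_pos hYW, mul_one]
    · rw [if_neg (fun hc => hYW (h3.1 hc)), if_neg hYW, mul_zero]
  calc ∑ Y : ι → α, (Fintype.card (ι → α) : ℝ)⁻¹ * H (fun j => e j (Y j))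
      = ∑ Y : ι → α, ∑ W : ι → β,
          (if (fun j => e j (Y j)) = W then (Fintype.card (ι → α) : ℝ)⁻¹ * H W else 0) := by
        refine Finset.sum_congr rfl fun Y _ => ?_
        rw [Finset.sum_ite_eq]
        simp
    _ = ∑ W : ι → β, ∑ Y : ι → α,
          (if (fun j => e j (Y j)) = W then (Fintype.card (ι → α) : ℝ)⁻¹ * H W else 0) :=
        Finset.sum_comm
    _ = _ := by
        refine Finset.sum_congr rfl fun W _ => ?_
        rw [hcoef W, Finset.sum_mul]
        refine Finset.sum_congr rfl fun Y _ => ?_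
        by_cases hYW : (fun j => e j (Y j)) = W <;> simp [hYW]
lemma cube_le_partyNorm {N a k : ℕ} (ε' : ℝ)
    (Ext : (Fin N → ZMod 2) → (Fin a → ZMod 2))
    (f : (Fin k → (Fin a → ZMod 2)) → ZMod 2)
    (ρ : Fin k → Fin N → Option (ZMod 2))
    (hcl : ∀ i : Fin k, CloseTo (push (fun x => Ext (fill (ρ i) x))
      (unif (Fin N → ZMod 2))) (unif (Fin a → ZMod 2)) ε') :
    cube k (fun X : Fin k → (Fin N → ZMod 2) => pm1 (f (fun i => Ext (fill (ρ i) (X i)))))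
      ≤ partyNorm k a f + (2*(k:ℝ)) * (2*ε') := by
  classical
  set idx : Fin k ⊕ Fin k → Fin k := Sum.elim (fun i => i) (fun i => i) with hidx
  set e : (Fin k ⊕ Fin k) → (Fin N → ZMod 2) → (Fin a → ZMod 2) :=
    fun j x => Ext (fill (ρ (idx j)) x) with he
  set H : ((Fin k ⊕ Fin k) → (Fin a → ZMod 2)) → ℝ := fun W =>
    ∏ δ : Fin k → Bool, pm1 (f (fun i => if δ i then W (Sum.inr i) else W (Sum.inl i)))
    with hHdef
  have hH : ∀ W, |H W| ≤ 1 := by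
    intro W
    rw [hHdef]
    simp only []
    rw [Finset.abs_prod]
    refine le_of_eq (Finset.prod_eq_one fun δ _ => pm1_abs _)
  set p : (Fin k ⊕ Fin k) → (Fin a → ZMod 2) → ℝ :=
    fun j => push (e j) (unif (Fin N → ZMod 2)) with hp
  set q : (Fin k ⊕ Fin k) → (Fin a → ZMod 2) → ℝ := fun _ => unif (Fin a → ZMod 2) with hq
  have hcube : cube k (fun X : Fin k → (Fin N → ZMod 2) =>
      pm1 (f (fun i => Ext (fill (ρ i) (X i)))))
      = ∑ W : (Fin k ⊕ Fin k) → (Fin a → ZMod 2), (∏ j, p j (W j)) * H W := by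
    rw [cube]
    rw [sum_pair_to_sum (fun X0 X1 => ∏ δ : Fin k → Bool,
      (fun X : Fin k → (Fin N → ZMod 2) => pm1 (f (fun i => Ext (fill (ρ i) (X i)))))
        (sel δ X0 X1))]
    have hperY : ∀ Y : (Fin k ⊕ Fin k) → (Fin N → ZMod 2),
        (∏ δ : Fin k → Bool, (fun X : Fin k → (Fin N → ZMod 2) =>
          pm1 (f (fun i => Ext (fill (ρ i) (X i)))))
            (sel δ (fun i => Y (Sum.inl i)) (fun i => Y (Sum.inr i))))
        = H (fun j => e j (Y j)) := by
      intro Y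
      rw [hHdef]
      refine Finset.prod_congr rfl fun δ _ => ?_
      simp only []
      congr 1
      congr 1
      funext i
      by_cases hδ : δ i <;> simp [sel, hδ, he, hidx]
    rw [Finset.sum_congr rfl fun Y _ => hperY Y]
    rw [← card_pair_fun, div_eq_inv_mul, Finset.mul_sum]
    rw [sum_push_prod e H]
  have hparty : partyNorm k a f
      = ∑ W : (Fin k ⊕ Fin k) → (Fin a → ZMod 2), (∏ j, q j (W j)) * H W := by
    rw [partyNorm]
    rw [Finset.sum_congr rfl fun Z0 _ => Finset.sum_congr rfl fun Z1 _ =>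
      pm1_sum Finset.univ (fun δ : Fin k → Bool => f (fun i => if δ i then Z1 i else Z0 i))]
    rw [sum_pair_to_sum (fun Z0 Z1 => ∏ δ : Fin k → Bool,
      pm1 (f (fun i => if δ i then Z1 i else Z0 i)))]
    rw [← card_pair_fun]
    have hcoef : ∀ W : (Fin k ⊕ Fin k) → (Fin a → ZMod 2),
        (∏ j, q j (W j)) = (Fintype.card ((Fin k ⊕ Fin k) → (Fin a → ZMod 2)) : ℝ)⁻¹ := by
      intro W
      rw [hq]
      simp only [unif]
      conv_rhs => rw [Fintype.card_fun]
      rw [Finset.prod_const, Finset.card_univ, Nat.cast_pow, ← inv_pow]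
    rw [div_eq_inv_mul, Finset.mul_sum]
    refine Finset.sum_congr rfl fun W _ => ?_
    rw [hcoef W, hHdef]
  have hhyb := hybrid p q
    (fun j y => push_nonneg (e j) y)
    (fun j => push_sum (e j))
    (fun j y => unif_nonneg _ y)
    (fun j => unif_sum _)
    ε'
    (fun j h' hh' => close_exp (hcl (idx j)) h' hh')
    H hH
  rw [← hcube, ← hparty] at hhyb
  have hcard : (Fintype.card (Fin k ⊕ Fin k) : ℝ) = 2*(k:ℝ) := by
    rw [Fintype.card_sum, Fintype.card_fin]
    push_cast
    ring
  rw [hcard] at hhyb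
  have := le_trans (le_abs_self _) hhyb
  linarith

open Classical in
theorem stmt11
    (N a m k' c : ℕ) (hN : 0 < N) (ha : 0 < a) (hm : 0 < m) (hk' : 0 < k') (hc : 0 < c)
    (ε' γ : ℝ) (hε' : 0 ≤ ε') (hγ0 : 0 ≤ γ) (hγ1 : γ ≤ 1)
    (Ext : (Fin N → ZMod 2) → (Fin a → ZMod 2)) (hExt : OBFExtractor Ext k' ε')
    (f : (Fin (m + 1) → (Fin a → ZMod 2)) → ZMod 2)
    (ρ : Fin (m + 1) → Fin N → Option (ZMod 2))
    (hρ : ∀ i, k' ≤ (Finset.univ.filter (fun j => ρ i j = none)).card)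
    (g : (Fin (m + 1) → (Fin N → ZMod 2)) → ZMod 2)
    (hprot : ∃ (M : ℕ) (μ : Fin M → ℝ) (P : Fin M → NOF (m + 1) N c),
      (∀ i, 0 ≤ μ i) ∧ (∑ i, μ i = 1) ∧
      ∀ X : Fin (m + 1) → (Fin N → ZMod 2),
        (∑ i : Fin M,
            if (P i).out X ≠ g (fun i' j => (ρ i' j).getD (X i' j)) then μ i else 0)
          ≤ γ) :
    corr
      (fun X : Fin (m + 1) → (Fin N → ZMod 2) => f (fun i => Ext (fill (ρ i) (X i))))
      (fun X : Fin (m + 1) → (Fin N → ZMod 2) => g (fun i j => (ρ i j).getD (X i j)))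
    ≤ 2 * γ + (2:ℝ) ^ c *
        (partyNorm (m + 1) a f + 4 * ((m : ℝ) + 1) * ε') ^ ((1:ℝ) / 2 ^ (m + 1)) := by
  classical
  obtain ⟨M, μ, P, hμ0, hμsum, herr⟩ := hprot
  set Ff : (Fin (m+1) → (Fin N → ZMod 2)) → ℝ :=
    fun X => pm1 (f (fun i => Ext (fill (ρ i) (X i)))) with hFf
  set GG : (Fin (m+1) → (Fin N → ZMod 2)) → ZMod 2 :=
    fun X => g (fun i j => (ρ i j).getD (X i j)) with hGG
  set DC : ℝ := (Fintype.card (Fin (m+1) → Fin N → ZMod 2) : ℝ) with hDCdef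
  have hDCpos : 0 < DC := by rw [hDCdef]; exact_mod_cast Fintype.card_pos
  set B : ℝ := partyNorm (m+1) a f + 4 * ((m : ℝ) + 1) * ε' with hBdef
  set Bp : ℝ := (2:ℝ)^c * B ^ ((1:ℝ) / 2^(m+1)) with hBp
  have hcubeB : cube (m+1) Ff ≤ B := by
    have h0 := cube_le_partyNorm ε' Ext f ρ (fun i => hExt (ρ i) (hρ i))
    rw [hBdef]
    calc cube (m+1) Ff ≤ partyNorm (m+1) a f + (2*((m+1:ℕ):ℝ)) * (2*ε') := h0
      _ = partyNorm (m+1) a f + 4 * ((m : ℝ) + 1) * ε' := by push_cast; ring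
  have hW : ∀ i : Fin M, |(∑ X, Ff X * pm1 ((P i).out X)) / DC| ≤ Bp :=
    fun i => nof_bound (Nat.succ_pos m) (P i) Ff B hcubeB
  set E : ℝ := (∑ X, Ff X * pm1 (GG X)) / DC with hE
  set W : Fin M → ℝ := fun i => (∑ X, Ff X * pm1 ((P i).out X)) / DC with hWdef
  have hcorrE : corr
      (fun X : Fin (m + 1) → (Fin N → ZMod 2) => f (fun i => Ext (fill (ρ i) (X i))))
      (fun X : Fin (m + 1) → (Fin N → ZMod 2) => g (fun i j => (ρ i j).getD (X i j)))
      = |E| := by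
    rw [corr, hE]
    congr 1
    rw [Finset.sum_congr rfl fun X _ => pm1_add
      (f (fun i => Ext (fill (ρ i) (X i)))) (g (fun i j => (ρ i j).getD (X i j)))]
  have hEsplit : E = (∑ i, μ i * W i) + ∑ i, μ i * (E - W i) := by
    rw [← Finset.sum_add_distrib]
    rw [Finset.sum_congr rfl fun i _ => (show μ i * W i + μ i * (E - W i) = μ i * E by ring)]
    rw [← Finset.sum_mul, hμsum, one_mul]
  have hterm1 : |∑ i, μ i * W i| ≤ Bp := by
    calc |∑ i, μ i * W i| ≤ ∑ i, |μ i * W i| := Finset.abs_sum_le_sum_abs _ _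
      _ ≤ ∑ i, μ i * Bp := by
          refine Finset.sum_le_sum fun i _ => ?_
          rw [abs_mul, abs_of_nonneg (hμ0 i)]
          exact mul_le_mul_of_nonneg_left (hW i) (hμ0 i)
      _ = Bp := by rw [← Finset.sum_mul, hμsum, one_mul]
  have hdiff : ∀ i : Fin M, |E - W i| ≤
      (∑ X, |pm1 (GG X) - pm1 ((P i).out X)|) / DC := by
    intro i
    rw [hE, hWdef]
    simp only []
    rw [div_sub_div_same, ← Finset.sum_sub_distrib]
    rw [abs_div, abs_of_pos hDCpos]
    gcongr
    refine le_trans (Finset.abs_sum_le_sum_abs _ _) (Finset.sum_le_sum fun X _ => ?_)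
    rw [show Ff X * pm1 (GG X) - Ff X * pm1 ((P i).out X)
      = Ff X * (pm1 (GG X) - pm1 ((P i).out X)) by ring]
    rw [abs_mul, hFf]
    simp only []
    rw [pm1_abs, one_mul]
  have hperX : ∀ X, (∑ i, μ i * |pm1 (GG X) - pm1 ((P i).out X)|) ≤ 2 * γ := by
    intro X
    have hle : ∀ i : Fin M, μ i * |pm1 (GG X) - pm1 ((P i).out X)|
        ≤ 2 * (if (P i).out X ≠ GG X then μ i else 0) := by
      intro i
      by_cases hiX : (P i).out X = GG X
      · rw [hiX]
        simp [hiX]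
      · have h2 : |pm1 (GG X) - pm1 ((P i).out X)| ≤ 2 := by
          rcases zmod2_cases (GG X) with h | h <;> rcases zmod2_cases ((P i).out X) with h' | h' <;>
            rw [h, h'] <;> norm_num [pm1]
        rw [if_pos hiX]
        calc μ i * |pm1 (GG X) - pm1 ((P i).out X)| ≤ μ i * 2 :=
              mul_le_mul_of_nonneg_left h2 (hμ0 i)
          _ = 2 * μ i := by ring
    calc (∑ i, μ i * |pm1 (GG X) - pm1 ((P i).out X)|)
        ≤ ∑ i, 2 * (if (P i).out X ≠ GG X then μ i else 0) := Finset.sum_le_sum fun i _ => hle i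
      _ = 2 * ∑ i, (if (P i).out X ≠ GG X then μ i else 0) := by rw [Finset.mul_sum]
      _ ≤ 2 * γ := by
          have := herr X
          rw [hGG]
          linarith [this]
  have hterm2 : (∑ i, μ i * (E - W i)) ≤ 2 * γ ∧ -(2*γ) ≤ ∑ i, μ i * (E - W i) := by
    have habs : |∑ i, μ i * (E - W i)| ≤ 2 * γ := by
      calc |∑ i, μ i * (E - W i)| ≤ ∑ i, |μ i * (E - W i)| := Finset.abs_sum_le_sum_abs _ _
        _ ≤ ∑ i, μ i * ((∑ X, |pm1 (GG X) - pm1 ((P i).out X)|) / DC) := by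
            refine Finset.sum_le_sum fun i _ => ?_
            rw [abs_mul, abs_of_nonneg (hμ0 i)]
            exact mul_le_mul_of_nonneg_left (hdiff i) (hμ0 i)
        _ = (∑ X, (∑ i, μ i * |pm1 (GG X) - pm1 ((P i).out X)|)) / DC := by
            calc ∑ i, μ i * ((∑ X, |pm1 (GG X) - pm1 ((P i).out X)|) / DC)
                = ∑ i, (∑ X, μ i * |pm1 (GG X) - pm1 ((P i).out X)|) / DC := by
                  refine Finset.sum_congr rfl fun i _ => ?_
                  rw [← mul_div_assoc, Finset.mul_sum]
              _ = (∑ i, ∑ X, μ i * |pm1 (GG X) - pm1 ((P i).out X)|) / DC := by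
                  rw [← Finset.sum_div]
              _ = _ := by
                  congr 1
                  exact Finset.sum_comm
        _ ≤ (∑ _X : Fin (m+1) → Fin N → ZMod 2, 2 * γ) / DC := by
            gcongr with X hX
            exact hperX X
        _ = 2 * γ := by
            rw [Finset.sum_const, Finset.card_univ, nsmul_eq_mul, ← hDCdef]
            field_simp
    constructor
    · exact le_trans (le_abs_self _) habs
    · have := neg_abs_le (∑ i, μ i * (E - W i))
      linarith
  rw [hcorrE]
  have h1 : |E| ≤ |∑ i, μ i * W i| + |∑ i, μ i * (E - W i)| := by
    calc |E| = |(∑ i, μ i * W i) + ∑ i, μ i * (E - W i)| := by rw [← hEsplit]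
      _ ≤ _ := abs_add_le _ _
  have h2 : |∑ i, μ i * (E - W i)| ≤ 2 * γ := abs_le.2 ⟨hterm2.2, hterm2.1⟩
  calc |E| ≤ |∑ i, μ i * W i| + |∑ i, μ i * (E - W i)| := h1
    _ ≤ Bp + 2 * γ := add_le_add hterm1 h2
    _ = 2 * γ + (2:ℝ) ^ c * B ^ ((1:ℝ) / 2 ^ (m + 1)) := by rw [hBp]; ring
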